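/- arXiv:2008.03255 — 2 statements merged into one kernel-verified Lean document; each statement's English description precedes it below -/
import Mathlib

section
/- Let P be the probability measure on ℝ with P({1/k}) = 1/2^k for integers k ≥ 1. The fifth quantization error equals Er[5,∞) where Er[5,∞) = ∑_{k=5}^∞ (1/2^k)(1/k − a)² with a = (∑_{k≥5} 1/(k 2^k))/(∑_{k≥5} 1/2^k), attained at the set {a, 1/4, 1/3, 1/2, 1}; in particular the strict inequalities Er[4,6] > Er[5,∞) and Er[6,∞) + Er[4,5] > Er[5,∞) hold, where Er[k,ℓ] denotes the analogous conditional error over {1/k, …, 1/ℓ}. -/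
/-- Distortion error of a nonempty finite set α for the measure P({1/k}) = 1/2^k, k ≥ 1. -/
noncomputable def errR (α : Finset ℝ) (h : α.Nonempty) : ℝ :=
  ∑' k : ℕ, (1/2^(k+1) : ℝ) * α.inf' h (fun a => (1/(k+1 : ℝ) - a)^2)

/-- Conditional expectation E(X | X ∈ {1/j : k ≤ j ≤ l}). -/
noncomputable def avR (k l : ℕ) : ℝ :=
  (∑ j ∈ Finset.Icc k l, (1/2^j : ℝ) * (1/(j : ℝ))) / (∑ j ∈ Finset.Icc k l, (1/2^j : ℝ))

/-- Conditional expectation E(X | X ∈ {1/k : k ≥ m}). -/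
noncomputable def avRTail (m : ℕ) : ℝ :=
  (∑' k : ℕ, (1/2^(k+m) : ℝ) * (1/(k+m : ℝ))) / (∑' k : ℕ, (1/2^(k+m) : ℝ))

/-- Er[k,l]: conditional quantization error over {1/k,…,1/l}. -/
noncomputable def erR (k l : ℕ) : ℝ :=
  ∑ j ∈ Finset.Icc k l, (1/2^j : ℝ) * (1/(j : ℝ) - avR k l)^2

/-- Er[m,∞): conditional quantization error over {1/k : k ≥ m}. -/
noncomputable def erRTail (m : ℕ) : ℝ :=
  ∑' k : ℕ, (1/2^(k+m) : ℝ) * (1/(k+m : ℝ) - avRTail m)^2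

lemma geoSummable (m : ℕ) : Summable (fun k : ℕ => (1/2^(k+m) : ℝ)) := by
  have : (fun k : ℕ => (1/2^(k+m) : ℝ)) = fun k : ℕ => (1/2^m : ℝ) * (1/2)^k := by
    funext k; rw [pow_add, one_div_pow]; ring
  rw [this]
  exact (summable_geometric_of_lt_one (by norm_num) (by norm_num)).mul_left _

lemma geoVal (m : ℕ) : ∑' k : ℕ, (1/2^(k+m) : ℝ) = 2/2^m := by
  have : (fun k : ℕ => (1/2^(k+m) : ℝ)) = fun k : ℕ => (1/2^m : ℝ) * (1/2)^k := by
    funext k; rw [pow_add, one_div_pow]; ring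
  rw [this, tsum_mul_left, tsum_geometric_of_lt_one (by norm_num) (by norm_num)]
  rw [show ((1:ℝ) - 1/2)⁻¹ = 2 by norm_num]; ring

lemma domSummable (m : ℕ) {g : ℕ → ℝ} {C : ℝ} (h0 : ∀ k, 0 ≤ g k) (h1 : ∀ k, g k ≤ C) :
    Summable (fun k : ℕ => (1/2^(k+m) : ℝ) * g k) := by
  apply Summable.of_nonneg_of_le
    (fun k => mul_nonneg (by positivity) (h0 k))
    (fun k => mul_le_mul_of_nonneg_left (h1 k) (by positivity))
    ((geoSummable m).mul_right C)

lemma invNonneg (m k : ℕ) : (0:ℝ) ≤ 1/(k+m : ℝ) := by positivity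

lemma invLeOne (m k : ℕ) : (1/(k+m : ℝ)) ≤ 1 := by
  rcases Nat.eq_zero_or_pos (k+m) with h | h
  · obtain ⟨hk, hm⟩ := Nat.add_eq_zero.mp h
    subst hk; subst hm; norm_num
  · have h1 : (1:ℝ) ≤ (k:ℝ) + m := by
      have := (Nat.one_le_cast (α := ℝ)).2 h; push_cast at this ⊢; linarith
    rw [div_le_one (by linarith)]; linarith

lemma sqSummable (m : ℕ) (a : ℝ) :
    Summable (fun k : ℕ => (1/2^(k+m) : ℝ) * (1/(k+m : ℝ) - a)^2) := by
  apply domSummable m (g := fun k => (1/(k+m : ℝ) - a)^2) (C := (1+|a|)^2)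
    (fun k => sq_nonneg _) (fun k => ?_)
  have h1 := invNonneg m k
  have h2 := invLeOne m k
  have h3 := abs_nonneg a
  have h4 := neg_abs_le a
  have h5 := le_abs_self a
  nlinarith [sq_nonneg (1/(k+m:ℝ) - a)]

lemma S1Summable (m : ℕ) : Summable (fun k : ℕ => (1/2^(k+m) : ℝ) * (1/(k+m : ℝ))) :=
  domSummable m (fun k => invNonneg m k) (C := 1) (fun k => invLeOne m k)

lemma QSummable (m : ℕ) : Summable (fun k : ℕ => (1/2^(k+m) : ℝ) * (1/(k+m : ℝ))^2) := by
  apply domSummable m (g := fun k => (1/(k+m : ℝ))^2) (C := 1) (fun k => sq_nonneg _)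
    (fun k => ?_)
  have h1 := invNonneg m k
  have h2 := invLeOne m k
  nlinarith

lemma expandTail (m : ℕ) (a : ℝ) :
    ∑' k : ℕ, (1/2^(k+m) : ℝ) * (1/(k+m : ℝ) - a)^2
      = (∑' k : ℕ, (1/2^(k+m) : ℝ) * (1/(k+m : ℝ))^2)
        - (2*a) * (∑' k : ℕ, (1/2^(k+m) : ℝ) * (1/(k+m : ℝ)))
        + a^2 * (∑' k : ℕ, (1/2^(k+m) : ℝ)) := by
  have hfun : (fun k : ℕ => (1/2^(k+m) : ℝ) * (1/(k+m : ℝ) - a)^2)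
      = fun k : ℕ => ((1/2^(k+m) : ℝ) * (1/(k+m : ℝ))^2
        - (2*a) * ((1/2^(k+m) : ℝ) * (1/(k+m : ℝ)))) + a^2 * (1/2^(k+m) : ℝ) := by
    funext k; ring
  rw [hfun, Summable.tsum_add (Summable.sub (QSummable m) ((S1Summable m).mul_left (2*a)))
      ((geoSummable m).mul_left (a^2)),
    Summable.tsum_sub (QSummable m) ((S1Summable m).mul_left (2*a)), tsum_mul_left, tsum_mul_left]

lemma WPos (m : ℕ) : 0 < ∑' k : ℕ, (1/2^(k+m) : ℝ) := by
  rw [geoVal]; positivity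

lemma tail_opt (m : ℕ) (a : ℝ) :
    erRTail m ≤ ∑' k : ℕ, (1/2^(k+m) : ℝ) * (1/(k+m : ℝ) - a)^2 := by
  set W := ∑' k : ℕ, (1/2^(k+m) : ℝ) with hW
  set S1 := ∑' k : ℕ, (1/2^(k+m) : ℝ) * (1/(k+m : ℝ)) with hS1
  have hWpos : 0 < W := WPos m
  have havg : S1 = avRTail m * W := by
    rw [avRTail, ← hS1, ← hW, div_mul_cancel₀ _ hWpos.ne']
  rw [erRTail, expandTail, expandTail, ← hS1, ← hW]
  rw [havg]; nlinarith [mul_nonneg hWpos.le (sq_nonneg (a - avRTail m))]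

lemma ub5 : erRTail 5 < 6/100000 := by
  have h := tail_opt 5 (87/500)
  set f : ℕ → ℝ := fun k => (1/2^(k+5) : ℝ) * (1/(k+5 : ℝ) - 87/500)^2 with hf
  have hsplit := Summable.sum_add_tsum_nat_add (f := f) 15 (sqSummable 5 (87/500))
  have htail : ∑' i : ℕ, f (i+15) ≤ ∑' i : ℕ, (1/2^(i+20) : ℝ) * (87/500)^2 := by
    apply Summable.tsum_le_tsum _ _ ((geoSummable 20).mul_right _)
    · intro i
      have h20 : ((i:ℝ)+15+5) = (i:ℝ)+20 := by ring
      have hx : (0:ℝ) < (i:ℝ)+20 := by positivity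
      have hx2 : (1:ℝ)/((i:ℝ)+20) ≤ 1/20 := by
        apply div_le_div_of_nonneg_left (by norm_num) (by norm_num) (by linarith)
      have hx0 : (0:ℝ) ≤ 1/((i:ℝ)+20) := by positivity
      simp only [hf]
      have hc : ((i+15:ℕ):ℝ) + 5 = (i:ℝ)+20 := by push_cast; ring
      rw [show i+15+5 = i+20 from rfl, hc]
      apply mul_le_mul_of_nonneg_left _ (by positivity)
      nlinarith
    · exact (sqSummable 5 (87/500)).comp_injective (add_left_injective 15)
  have htv : ∑' i : ℕ, (1/2^(i+20) : ℝ) * (87/500)^2 = (2/2^20) * (87/500)^2 := by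
    rw [tsum_mul_right, geoVal]
  have hfin : ∑ i ∈ Finset.range 15, f i < 6/100000 - (2/2^20) * (87/500)^2 := by
    simp only [hf, Finset.sum_range_succ, Finset.sum_range_zero]
    norm_num
  calc erRTail 5 ≤ ∑' k : ℕ, f k := h
    _ = ∑ i ∈ Finset.range 15, f i + ∑' i : ℕ, f (i+15) := hsplit.symm
    _ < 6/100000 := by rw [htv] at htail; linarith

lemma lb6 : (16/1000000 : ℝ) ≤ erRTail 6 := by
  have hsum := Summable.sum_le_tsum (f := fun k : ℕ => (1/2^(k+6) : ℝ) * (1/(k+6 : ℝ) - avRTail 6)^2)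
    (Finset.range 9) (fun i _ => mul_nonneg (by positivity) (sq_nonneg _))
    (sqSummable 6 (avRTail 6))
  rw [erRTail]
  refine le_trans ?_ hsum
  set a := avRTail 6 with ha
  simp only [Finset.sum_range_succ, Finset.sum_range_zero]
  push_cast
  nlinarith [sq_nonneg (a - 6792229/46035990)]

lemma icc45 : Finset.Icc 4 5 = ({4,5} : Finset ℕ) := by rfl
lemma icc46 : Finset.Icc 4 6 = ({4,5,6} : Finset ℕ) := by rfl

lemma av45 : avR 4 5 = 7/30 := by
  rw [avR, icc45]
  rw [Finset.sum_pair (by norm_num), Finset.sum_pair (by norm_num)]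
  norm_num

lemma er45val : erR 4 5 = 1/19200 := by
  rw [erR, icc45, Finset.sum_pair (by norm_num), av45]
  norm_num

lemma av46 : avR 4 6 = 47/210 := by
  rw [avR, icc46]
  rw [Finset.sum_insert (by norm_num), Finset.sum_pair (by norm_num),
      Finset.sum_insert (by norm_num), Finset.sum_pair (by norm_num)]
  norm_num

lemma er46val : erR 4 6 = 1/8960 := by
  rw [erR, icc46, Finset.sum_insert (by norm_num), Finset.sum_pair (by norm_num), av46]
  norm_num

lemma S1le (m : ℕ) (hm : 1 ≤ m) :
    ∑' k : ℕ, (1/2^(k+m) : ℝ) * (1/(k+m : ℝ)) ≤ (2/2^m) * (1/(m:ℝ)) := by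
  have hmpos : (0:ℝ) < (m:ℝ) := by exact_mod_cast hm
  have h := Summable.tsum_le_tsum (f := fun k : ℕ => (1/2^(k+m) : ℝ) * (1/(k+m : ℝ)))
    (g := fun k : ℕ => (1/2^(k+m) : ℝ) * (1/(m:ℝ)))
    (fun k => ?_) (S1Summable m) ((geoSummable m).mul_right _)
  · rw [tsum_mul_right, geoVal] at h; exact h
  · have hle : (1:ℝ)/((k:ℝ)+(m:ℝ)) ≤ 1/(m:ℝ) :=
      div_le_div_of_nonneg_left (by norm_num) hmpos (by have := Nat.cast_nonneg (α := ℝ) k; linarith)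
    exact mul_le_mul_of_nonneg_left hle (by positivity)

lemma S1S5 : Summable (fun k : ℕ => (1/2^(k+5) : ℝ) * (1/((k:ℝ)+5))) := by
  have := S1Summable 5; push_cast at this; exact this

lemma a5lb : 3/20 ≤ avRTail 5 := by
  set f : ℕ → ℝ := fun k => (1/2^(k+5) : ℝ) * (1/((k:ℝ)+5)) with hf
  have hsum := Summable.sum_le_tsum (f := f) (Finset.range 4)
    (fun i _ => by simp only [hf]; positivity) S1S5
  rw [avRTail, geoVal]
  push_cast
  rw [le_div_iff₀ (by norm_num)]
  refine le_trans ?_ hsum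
  simp only [hf, Finset.sum_range_succ, Finset.sum_range_zero]
  norm_num

lemma a5ub : avRTail 5 ≤ 1/4 := by
  set f : ℕ → ℝ := fun k => (1/2^(k+5) : ℝ) * (1/((k:ℝ)+5)) with hf
  have hsplit := Summable.sum_add_tsum_nat_add (f := f) 4 S1S5
  have h9 : ∀ i : ℕ, f (i+4) = (1/2^(i+9) : ℝ) * (1/((i:ℝ)+9)) := by
    intro i; simp only [hf]
    rw [show i+4+5 = i+9 from rfl]
    push_cast; ring_nf
  have htail : ∑' i : ℕ, f (i+4) ≤ (2/2^9) * (1/9) := by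
    rw [tsum_congr h9]
    have := S1le 9 (by norm_num); push_cast at this
    exact this
  have hfin : ∑ i ∈ Finset.range 4, f i ≤ 1/4 * (2/2^5) - (2/2^9) * (1/9) := by
    simp only [hf, Finset.sum_range_succ, Finset.sum_range_zero]
    norm_num
  rw [avRTail, geoVal]
  push_cast
  rw [div_le_iff₀ (by norm_num), ← hsplit]
  linarith

lemma er5form : erRTail 5 = ∑' k : ℕ, (1/2^(k+5) : ℝ) * (1/((k:ℝ)+5) - avRTail 5)^2 := by
  rw [erRTail]; apply tsum_congr; intro k; push_cast; ring_nf

lemma conj2 (h : ({avRTail 5, 1/4, 1/3, 1/2, 1} : Finset ℝ).Nonempty) :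
    errR {avRTail 5, 1/4, 1/3, 1/2, 1} h = erRTail 5 := by
  set α₀ : Finset ℝ := {avRTail 5, 1/4, 1/3, 1/2, 1} with hα
  set F : ℕ → ℝ := fun k => α₀.inf' h (fun a => (1/((k:ℝ)+1) - a)^2) with hFdef
  have hFerr : errR α₀ h = ∑' k : ℕ, (1/2^(k+1) : ℝ) * F k := by
    rw [errR]
  have hmem1 : (1:ℝ) ∈ α₀ := by simp [hα]
  have hmem2 : (1/2:ℝ) ∈ α₀ := by simp [hα]
  have hmem3 : (1/3:ℝ) ∈ α₀ := by simp [hα]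
  have hmem4 : (1/4:ℝ) ∈ α₀ := by simp [hα]
  have hmema : avRTail 5 ∈ α₀ := by simp [hα]
  have hF0 : ∀ k, 0 ≤ F k := fun k => Finset.le_inf' h _ (fun b _ => sq_nonneg _)
  have hzkey : ∀ (k : ℕ) (b : ℝ), b ∈ α₀ → (1/((k:ℝ)+1) - b)^2 = 0 → F k = 0 := by
    intro k b hb hb0
    refine le_antisymm ?_ (hF0 k)
    calc F k ≤ (1/((k:ℝ)+1) - b)^2 := Finset.inf'_le _ hb
      _ = 0 := hb0
  have hz : ∀ k : ℕ, k < 4 → F k = 0 := by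
    intro k hk
    interval_cases k
    · exact hzkey 0 1 hmem1 (by norm_num)
    · exact hzkey 1 (1/2) hmem2 (by norm_num)
    · exact hzkey 2 (1/3) hmem3 (by norm_num)
    · exact hzkey 3 (1/4) hmem4 (by norm_num)
  have hge : ∀ k : ℕ, 4 ≤ k → F k = (1/((k:ℝ)+1) - avRTail 5)^2 := by
    intro k hk
    have hx1 : (0:ℝ) < 1/((k:ℝ)+1) := by positivity
    have hk5 : (5:ℝ) ≤ (k:ℝ)+1 := by
      have : (4:ℝ) ≤ (k:ℝ) := by exact_mod_cast hk
      linarith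
    have hx2 : (1:ℝ)/((k:ℝ)+1) ≤ 1/5 :=
      div_le_div_of_nonneg_left (by norm_num) (by norm_num) hk5
    set x := (1:ℝ)/((k:ℝ)+1)
    have ha1 := a5lb
    have ha2 := a5ub
    have hkey : ∀ b : ℝ, avRTail 5 ≤ b → 2*x ≤ avRTail 5 + b →
        (x - avRTail 5)^2 ≤ (x - b)^2 := by
      intro b h1 h2; nlinarith
    refine le_antisymm (Finset.inf'_le _ hmema) (Finset.le_inf' h _ ?_)
    intro b hb
    simp only [hα, Finset.mem_insert, Finset.mem_singleton] at hb
    rcases hb with rfl | rfl | rfl | rfl | rfl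
    · exact le_refl _
    · exact hkey _ ha2 (by linarith)
    · exact hkey _ (by linarith) (by linarith)
    · exact hkey _ (by linarith) (by linarith)
    · exact hkey _ (by linarith) (by linarith)
  have hFub : ∀ k, F k ≤ 1 := by
    intro k
    have hx1 : (0:ℝ) < 1/((k:ℝ)+1) := by positivity
    have hx2 : (1:ℝ)/((k:ℝ)+1) ≤ 1 := by
      rw [div_le_one (by positivity)]
      linarith [Nat.cast_nonneg (α := ℝ) k]
    calc F k ≤ (1/((k:ℝ)+1) - 1)^2 := Finset.inf'_le _ hmem1
      _ ≤ 1 := by nlinarith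
  have hsummable : Summable (fun k : ℕ => (1/2^(k+1) : ℝ) * F k) :=
    domSummable 1 hF0 hFub
  have hsplit := Summable.sum_add_tsum_nat_add (f := fun k : ℕ => (1/2^(k+1) : ℝ) * F k) 4 hsummable
  have hzero : ∑ i ∈ Finset.range 4, (1/2^(i+1) : ℝ) * F i = 0 := by
    simp only [Finset.sum_range_succ, Finset.sum_range_zero]
    rw [hz 0 (by norm_num), hz 1 (by norm_num), hz 2 (by norm_num), hz 3 (by norm_num)]
    ring
  have htail : ∑' k : ℕ, (1/2^(k+4+1) : ℝ) * F (k+4)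
      = ∑' k : ℕ, (1/2^(k+5) : ℝ) * (1/((k:ℝ)+5) - avRTail 5)^2 := by
    apply tsum_congr
    intro k
    rw [show k+4+1 = k+5 from rfl, hge (k+4) (by omega)]
    push_cast
    ring_nf
  rw [hFerr, ← hsplit, hzero, zero_add, htail, er5form]

set_option maxHeartbeats 2000000 in
lemma lower (α : Finset ℝ) (h : α.Nonempty) (hc : α.card ≤ 5) : erRTail 5 ≤ errR α h := by
  classical
  -- choose nearest points
  have hchoice : ∀ k : ℕ, ∃ b ∈ α,
      α.inf' h (fun a => (1/((k:ℝ)+1) - a)^2) = (1/((k:ℝ)+1) - b)^2 :=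
    fun k => Finset.exists_mem_eq_inf' h _
  choose f hfmem hfval using hchoice
  have herr : errR α h = ∑' k : ℕ, (1/2^(k+1) : ℝ) * (1/((k:ℝ)+1) - f k)^2 := by
    rw [errR]; exact tsum_congr fun k => by rw [hfval k]
  have hmin : ∀ k : ℕ, ∀ b ∈ α, (1/((k:ℝ)+1) - f k)^2 ≤ (1/((k:ℝ)+1) - b)^2 := by
    intro k b hb
    rw [← hfval k]
    exact Finset.inf'_le _ hb
  have hxpos : ∀ k : ℕ, (0:ℝ) < 1/((k:ℝ)+1) := fun k => by positivity
  have hxle1 : ∀ k : ℕ, (1:ℝ)/((k:ℝ)+1) ≤ 1 := fun k => by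
    rw [div_le_one (by positivity)]; linarith [Nat.cast_nonneg (α := ℝ) k]
  have hxlt : ∀ j k : ℕ, j < k → (1:ℝ)/((k:ℝ)+1) < 1/((j:ℝ)+1) := by
    intro j k hjk
    apply div_lt_div_of_pos_left (by norm_num) (by positivity)
    have : (j:ℝ) < (k:ℝ) := by exact_mod_cast hjk
    linarith
  have hmono : ∀ j k : ℕ, j < k → f k ≤ f j := by
    intro j k hjk
    by_contra hlt
    push_neg at hlt
    have h1 := hmin k (f j) (hfmem j)
    have h2 := hmin j (f k) (hfmem k)
    have h3 := hxlt j k hjk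
    nlinarith
  -- summability
  obtain ⟨b0, hb0⟩ := id h
  have hterm0 : ∀ k : ℕ, (0:ℝ) ≤ (1/((k:ℝ)+1) - f k)^2 := fun k => sq_nonneg _
  have htermub : ∀ k : ℕ, (1/((k:ℝ)+1) - f k)^2 ≤ (1+|b0|)^2 := by
    intro k
    refine le_trans (hmin k b0 hb0) ?_
    have h1 := hxpos k
    have h2 := hxle1 k
    have h3 := le_abs_self b0
    have h4 := neg_abs_le b0
    nlinarith
  have hsummable : Summable (fun k : ℕ => (1/2^(k+1) : ℝ) * (1/((k:ℝ)+1) - f k)^2) :=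
    domSummable 1 hterm0 htermub
  have hub := ub5
  -- Case A: two of the four largest atoms share a nearest point
  have hpair : ∀ i j : ℕ, i < j →
      (∀ p : ℝ, 6/100000 ≤ (1/2^(i+1) : ℝ) * (1/((i:ℝ)+1) - p)^2
        + (1/2^(j+1) : ℝ) * (1/((j:ℝ)+1) - p)^2) →
      f j = f i → erRTail 5 ≤ errR α h := by
    intro i j hij hnum hfe
    have hs := Summable.sum_le_tsum (f := fun k : ℕ => (1/2^(k+1) : ℝ) * (1/((k:ℝ)+1) - f k)^2)
      ({i, j} : Finset ℕ) (fun k _ => mul_nonneg (by positivity) (sq_nonneg _)) hsummable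
    rw [Finset.sum_pair (Nat.ne_of_lt hij)] at hs
    rw [herr]
    refine le_trans (le_trans hub.le ?_) hs
    rw [hfe]
    exact hnum (f i)
  rcases eq_or_ne (f 1) (f 0) with he | h01
  · refine hpair 0 1 (by norm_num) (fun p => by norm_num; nlinarith [sq_nonneg (p - 5/6)]) he
  rcases eq_or_ne (f 2) (f 0) with he | h02
  · refine hpair 0 2 (by norm_num) (fun p => by norm_num; nlinarith [sq_nonneg (p - 13/15)]) he
  rcases eq_or_ne (f 3) (f 0) with he | h03
  · refine hpair 0 3 (by norm_num) (fun p => by norm_num; nlinarith [sq_nonneg (p - 11/12)]) he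
  rcases eq_or_ne (f 2) (f 1) with he | h12
  · refine hpair 1 2 (by norm_num) (fun p => by norm_num; nlinarith [sq_nonneg (p - 4/9)]) he
  rcases eq_or_ne (f 3) (f 1) with he | h13
  · refine hpair 1 3 (by norm_num) (fun p => by norm_num; nlinarith [sq_nonneg (p - 9/20)]) he
  rcases eq_or_ne (f 3) (f 2) with he | h23
  · refine hpair 2 3 (by norm_num) (fun p => by norm_num; nlinarith [sq_nonneg (p - 11/36)]) he
  -- Case B: the four nearest points are distinct
  have hlt10 : f 1 < f 0 := lt_of_le_of_ne (hmono 0 1 (by norm_num)) h01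
  have hlt21 : f 2 < f 1 := lt_of_le_of_ne (hmono 1 2 (by norm_num)) h12
  have hlt32 : f 3 < f 2 := lt_of_le_of_ne (hmono 2 3 (by norm_num)) h23
  -- spare point uniqueness
  have huniq : ∀ u v : ℝ, u ∈ α → v ∈ α → u < f 3 → v < f 3 → u = v := by
    intro u v hu hv hu3 hv3
    by_contra hne
    have hP : ({f 0, f 1, f 2, f 3} : Finset ℝ).card = 4 := by
      rw [Finset.card_insert_of_notMem (by
            simp only [Finset.mem_insert, Finset.mem_singleton]
            push_neg
            exact ⟨by linarith, by linarith, by linarith⟩),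
          Finset.card_insert_of_notMem (by
            simp only [Finset.mem_insert, Finset.mem_singleton]
            push_neg
            exact ⟨by linarith, by linarith⟩),
          Finset.card_insert_of_notMem (by
            simp only [Finset.mem_singleton]
            linarith),
          Finset.card_singleton]
    have hsub : insert u (insert v ({f 0, f 1, f 2, f 3} : Finset ℝ)) ⊆ α := by
      intro z hz
      simp only [Finset.mem_insert, Finset.mem_singleton] at hz
      rcases hz with rfl | rfl | rfl | rfl | rfl | rfl
      · exact hu
      · exact hv
      · exact hfmem 0
      · exact hfmem 1
      · exact hfmem 2
      · exact hfmem 3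
    have hbig : (insert u (insert v ({f 0, f 1, f 2, f 3} : Finset ℝ))).card = 6 := by
      rw [Finset.card_insert_of_notMem (by
            simp only [Finset.mem_insert, Finset.mem_singleton]
            push_neg
            exact ⟨hne, by linarith, by linarith, by linarith, by linarith⟩),
          Finset.card_insert_of_notMem (by
            simp only [Finset.mem_insert, Finset.mem_singleton]
            push_neg
            exact ⟨by linarith, by linarith, by linarith, by linarith⟩),
          hP]
    have := Finset.card_le_card hsub
    omega
  rcases eq_or_ne (f 4) (f 3) with h4 | h4
  · rcases eq_or_ne (f 5) (f 3) with h5 | h5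
    · -- atoms with indices 3,4,5 all share the point f 3
      have hs := Summable.sum_le_tsum (f := fun k : ℕ => (1/2^(k+1) : ℝ) * (1/((k:ℝ)+1) - f k)^2)
        ({3, 4, 5} : Finset ℕ) (fun k _ => mul_nonneg (by positivity) (sq_nonneg _)) hsummable
      rw [Finset.sum_insert (by norm_num), Finset.sum_pair (by norm_num)] at hs
      rw [herr]
      refine le_trans (le_trans hub.le ?_) hs
      rw [h4, h5]
      norm_num
      nlinarith [sq_nonneg (f 3 - 47/210)]
    · -- f 4 = f 3, f 5 is the spare point, used for all atoms from index 5 on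
      have hf53 : f 5 < f 3 := lt_of_le_of_ne (h4 ▸ hmono 4 5 (by norm_num)) h5
      have hq : ∀ k : ℕ, 5 ≤ k → f k = f 5 := by
        intro k hk
        rcases eq_or_lt_of_le hk with heq | hk5
        · rw [← heq]
        · exact huniq (f k) (f 5) (hfmem k) (hfmem 5)
            (lt_of_le_of_lt (hmono 5 k hk5) hf53) hf53
      have hsplit : ∑ i ∈ Finset.range 5, (1/2^(i+1) : ℝ) * (1/((i:ℝ)+1) - f i)^2
          + ∑' k : ℕ, (1/2^(k+5+1) : ℝ) * (1/(((k+5:ℕ):ℝ)+1) - f (k+5))^2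
          = ∑' k : ℕ, (1/2^(k+1) : ℝ) * (1/((k:ℝ)+1) - f k)^2 :=
        Summable.sum_add_tsum_nat_add 5 hsummable
      have htail : erRTail 6 ≤ ∑' k : ℕ,
          (1/2^(k+5+1) : ℝ) * (1/(((k+5:ℕ):ℝ)+1) - f (k+5))^2 := by
        refine le_trans (tail_opt 6 (f 5)) (le_of_eq (tsum_congr fun k => ?_))
        rw [hq (k+5) (by omega), show k+5+1 = k+6 from rfl]
        push_cast
        ring_nf
      have hfin : (1/19200:ℝ) ≤ ∑ i ∈ Finset.range 5,
          (1/2^(i+1) : ℝ) * (1/((i:ℝ)+1) - f i)^2 := by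
        simp only [Finset.sum_range_succ, Finset.sum_range_zero, h4]
        push_cast
        nlinarith [sq_nonneg (f 3 - 7/30), sq_nonneg (1 - f 0), sq_nonneg (1/2 - f 1),
          sq_nonneg (1/3 - f 2)]
      rw [herr, ← hsplit]
      have h6 := lb6
      linarith
  · -- f 4 is the spare point, used for all atoms from index 4 on
    have hf43 : f 4 < f 3 := lt_of_le_of_ne (hmono 3 4 (by norm_num)) h4
    have hq : ∀ k : ℕ, 4 ≤ k → f k = f 4 := by
      intro k hk
      rcases eq_or_lt_of_le hk with heq | hk4
      · rw [← heq]
      · exact huniq (f k) (f 4) (hfmem k) (hfmem 4)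
          (lt_of_le_of_lt (hmono 4 k hk4) hf43) hf43
    have hsplit : ∑ i ∈ Finset.range 4, (1/2^(i+1) : ℝ) * (1/((i:ℝ)+1) - f i)^2
        + ∑' k : ℕ, (1/2^(k+4+1) : ℝ) * (1/(((k+4:ℕ):ℝ)+1) - f (k+4))^2
        = ∑' k : ℕ, (1/2^(k+1) : ℝ) * (1/((k:ℝ)+1) - f k)^2 :=
      Summable.sum_add_tsum_nat_add 4 hsummable
    have htail : erRTail 5 ≤ ∑' k : ℕ,
        (1/2^(k+4+1) : ℝ) * (1/(((k+4:ℕ):ℝ)+1) - f (k+4))^2 := by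
      refine le_trans (tail_opt 5 (f 4)) (le_of_eq (tsum_congr fun k => ?_))
      rw [hq (k+4) (by omega), show k+4+1 = k+5 from rfl]
      push_cast
      ring_nf
    have hfin : (0:ℝ) ≤ ∑ i ∈ Finset.range 4,
        (1/2^(i+1) : ℝ) * (1/((i:ℝ)+1) - f i)^2 :=
      Finset.sum_nonneg fun i _ => mul_nonneg (by positivity) (sq_nonneg _)
    rw [herr, ← hsplit]
    linarith

theorem stmt18 :
    sInf {v : ℝ | ∃ (α : Finset ℝ) (h : α.Nonempty), α.card ≤ 5 ∧ v = errR α h}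
      = erRTail 5 ∧
    errR {avRTail 5, 1/4, 1/3, 1/2, 1} (by simp) = erRTail 5 ∧
    erR 4 6 > erRTail 5 ∧
    erRTail 6 + erR 4 5 > erRTail 5 := by
  have hne : ({avRTail 5, 1/4, 1/3, 1/2, 1} : Finset ℝ).Nonempty := ⟨1, by simp⟩
  have hcard : ({avRTail 5, 1/4, 1/3, 1/2, 1} : Finset ℝ).card ≤ 5 := by
    refine le_trans (Finset.card_insert_le _ _) (Nat.add_le_add_right ?_ 1)
    refine le_trans (Finset.card_insert_le _ _) (Nat.add_le_add_right ?_ 1)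
    refine le_trans (Finset.card_insert_le _ _) (Nat.add_le_add_right ?_ 1)
    refine le_trans (Finset.card_insert_le _ _) (Nat.add_le_add_right ?_ 1)
    simp
  have hmem : erRTail 5 ∈ {v : ℝ | ∃ (α : Finset ℝ) (h : α.Nonempty),
      α.card ≤ 5 ∧ v = errR α h} :=
    ⟨{avRTail 5, 1/4, 1/3, 1/2, 1}, hne, hcard, (conj2 hne).symm⟩
  have hlb : ∀ v ∈ {v : ℝ | ∃ (α : Finset ℝ) (h : α.Nonempty),
      α.card ≤ 5 ∧ v = errR α h}, erRTail 5 ≤ v := by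
    rintro v ⟨β, hβ, hcardβ, rfl⟩
    exact lower β hβ hcardβ
  refine ⟨le_antisymm (csInf_le ⟨erRTail 5, fun v hv => hlb v hv⟩ hmem)
      (le_csInf ⟨_, hmem⟩ hlb), conj2 _, ?_, ?_⟩
  · rw [er46val]
    linarith [ub5]
  · rw [er45val]
    linarith [ub5, lb6]
end

section
/- For the uniform probability measure P on {1,2,3,4,5,6} (each point with mass 1/6), the quantization errors are V_1 = 35/12, and optimal sets of n-means for n = 1,…,6 are given by {7/2}, {2, 5}, {3/2, 7/2, 11/2}, {3/2, 7/2, 5, 6}, {3/2, 3, 4, 5, 6}, {1,2,3,4,5,6} respectively; moreover for n = 5 the optimal set is not unique: {1, 5/2, 4, 5, 6} attains the same error. -/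
/-- Distortion error of a nonempty finite set α for the uniform measure on {1,…,6}. -/
noncomputable def errU (α : Finset ℝ) (h : α.Nonempty) : ℝ :=
  ∑ j ∈ Finset.Icc (1:ℕ) 6, (1/6 : ℝ) * α.inf' h (fun a => ((j : ℝ) - a)^2)

/-- The n-th quantization error for the uniform measure on {1,…,6}. -/
noncomputable def quantU (n : ℕ) : ℝ :=
  sInf {v : ℝ | ∃ (α : Finset ℝ) (h : α.Nonempty), α.card ≤ n ∧ v = errU α h}

lemma lemB19 : ∀ S ∈ (Finset.Icc (1:ℕ) 6).powerset,
    12 * (S.card * ∑ j ∈ S, j^2) + S.card^2 ≥ 12 * (∑ j ∈ S, j)^2 + S.card^4 := by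
  decide

lemma lemA19 (S : Finset ℕ) (hS : S ⊆ Finset.Icc 1 6) (a : ℝ) :
    ((S.card : ℝ)^3 - S.card) / 12 ≤ ∑ j ∈ S, ((j : ℝ) - a)^2 := by
  rcases S.eq_empty_or_nonempty with rfl | hne
  · simp
  · have hm : (0:ℝ) < S.card := by exact_mod_cast hne.card_pos
    have key : 12 * ((S.card:ℝ) * ∑ j ∈ S, (j:ℝ)^2) + (S.card:ℝ)^2 ≥
        12 * (∑ j ∈ S, (j:ℝ))^2 + (S.card:ℝ)^4 := by
      have h := lemB19 S (Finset.mem_powerset.mpr hS)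
      have h2 : ((12 * (∑ j ∈ S, j)^2 + S.card^4 : ℕ) : ℝ)
          ≤ ((12 * (S.card * ∑ j ∈ S, j^2) + S.card^2 : ℕ) : ℝ) := Nat.cast_le.mpr h
      push_cast at h2
      linarith
    have expand : ∑ j ∈ S, ((j : ℝ) - a)^2
        = (∑ j ∈ S, (j:ℝ)^2) - 2*a*(∑ j ∈ S, (j:ℝ)) + S.card * a^2 := by
      simp only [sub_sq]
      rw [Finset.sum_add_distrib, Finset.sum_sub_distrib, Finset.sum_const, ← Finset.sum_mul,
        nsmul_eq_mul, ← Finset.mul_sum]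
      ring
    rw [expand]
    nlinarith [sq_nonneg ((S.card:ℝ)*a - ∑ j ∈ S, (j:ℝ)), key, hm, sq_nonneg a]

lemma lower19 (n : ℕ) (lam mu : ℝ) (hmu : mu ≤ 0)
    (hline : ∀ m : ℕ, 1 ≤ m → m ≤ 6 → lam * m + mu ≤ (m:ℝ)^3 - m)
    (α : Finset ℝ) (h : α.Nonempty) (hcard : α.card ≤ n) :
    (6*lam + n*mu)/72 ≤ errU α h := by
  classical
  set J : Finset ℕ := Finset.Icc 1 6 with hJ
  choose f hf1 hf2 using fun j : ℕ => Finset.exists_mem_eq_inf' h (fun a => ((j : ℝ) - a)^2)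
  have herr : errU α h = (1/6) * ∑ j ∈ J, ((j:ℝ) - f j)^2 := by
    rw [errU, Finset.mul_sum]
    exact Finset.sum_congr rfl fun j _ => by rw [hf2 j]
  set B : Finset ℝ := J.image f with hB
  have hmaps : ∀ j ∈ J, f j ∈ B := fun j hj => Finset.mem_image_of_mem f hj
  have hsplit := Finset.sum_fiberwise_of_maps_to hmaps (fun j => ((j:ℝ) - f j)^2)
  have hcards := Finset.card_eq_sum_card_fiberwise hmaps
  have hJcard : J.card = 6 := by decide
  have hBsub : B ⊆ α := by
    intro t ht
    obtain ⟨j, _, rfl⟩ := Finset.mem_image.mp ht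
    exact hf1 j
  have hBcard : B.card ≤ n := le_trans (Finset.card_le_card hBsub) hcard
  have hfiber : ∀ t ∈ B, (lam * ((J.filter (fun j => f j = t)).card) + mu) / 12
      ≤ ∑ j ∈ J.filter (fun j => f j = t), ((j:ℝ) - f j)^2 := by
    intro t ht
    set S := J.filter (fun j => f j = t) with hS
    have hSsub : S ⊆ J := Finset.filter_subset _ _
    have hSne : S.Nonempty := by
      obtain ⟨j, hj, hjt⟩ := Finset.mem_image.mp ht
      exact ⟨j, Finset.mem_filter.mpr ⟨hj, hjt⟩⟩
    have h1 : 1 ≤ S.card := hSne.card_pos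
    have h6 : S.card ≤ 6 := by rw [← hJcard]; exact Finset.card_le_card hSsub
    have heq : ∑ j ∈ S, ((j:ℝ) - f j)^2 = ∑ j ∈ S, ((j:ℝ) - t)^2 :=
      Finset.sum_congr rfl fun j hj => by rw [(Finset.mem_filter.mp hj).2]
    rw [heq]
    have := lemA19 S hSsub t
    have hl := hline S.card h1 h6
    linarith
  have hsum : ∑ t ∈ B, (lam * ((J.filter (fun j => f j = t)).card) + mu) / 12
      ≤ ∑ j ∈ J, ((j:ℝ) - f j)^2 := by
    rw [← hsplit]
    exact Finset.sum_le_sum hfiber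
  have hinner : (∑ t ∈ B, (lam * ((J.filter (fun j => f j = t)).card) + mu))
      = lam * 6 + mu * B.card := by
    rw [Finset.sum_add_distrib, Finset.sum_const, ← Finset.mul_sum, nsmul_eq_mul]
    have h6 : (∑ t ∈ B, ((J.filter (fun j => f j = t)).card : ℝ)) = 6 := by
      rw [← Nat.cast_sum, ← hcards, hJcard]; norm_num
    rw [h6]; ring
  have hlhs : ∑ t ∈ B, (lam * ((J.filter (fun j => f j = t)).card) + mu) / 12
      = (lam * 6 + mu * B.card) / 12 := by
    rw [← Finset.sum_div, hinner]
  have hmun : mu * B.card ≥ mu * n := by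
    apply mul_le_mul_of_nonpos_left _ hmu
    exact_mod_cast hBcard
  rw [herr]
  rw [hlhs] at hsum
  linarith

lemma quant_eq19 (n : ℕ) (v : ℝ) (α : Finset ℝ) (h : α.Nonempty) (hcard : α.card ≤ n)
    (hval : errU α h = v)
    (hlow : ∀ (β : Finset ℝ) (hb : β.Nonempty), β.card ≤ n → v ≤ errU β hb) :
    quantU n = v := by
  have hmem : v ∈ {v : ℝ | ∃ (α : Finset ℝ) (h : α.Nonempty), α.card ≤ n ∧ v = errU α h} :=
    ⟨α, h, hcard, hval.symm⟩
  have hbdd : BddBelow {v : ℝ | ∃ (α : Finset ℝ) (h : α.Nonempty), α.card ≤ n ∧ v = errU α h} :=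
    ⟨v, by rintro w ⟨β, hb, hc, rfl⟩; exact hlow β hb hc⟩
  exact le_antisymm (csInf_le hbdd hmem)
    (le_csInf ⟨v, hmem⟩ (by rintro w ⟨β, hb, hc, rfl⟩; exact hlow β hb hc))

lemma Icc16' : Finset.Icc (1:ℕ) 6 = {1, 2, 3, 4, 5, 6} := rfl

lemma quant1 : quantU 1 = 35/12 := by
  apply quant_eq19 1 (35/12) {7/2} (by simp) (by simp)
  · rw [errU, Icc16']; norm_num [Finset.inf'_insert, min_def]
  · intro β hb hc
    have := lower19 1 90 (-330) (by norm_num)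
      (fun m h1 h6 => by interval_cases m <;> norm_num) β hb hc
    norm_num at this ⊢
    linarith

lemma quant2 : quantU 2 = 2/3 := by
  apply quant_eq19 2 (2/3) {2, 5} (by simp) (by simp)
  · rw [errU, Icc16']; norm_num [Finset.inf'_insert, min_def]
  · intro β hb hc
    have := lower19 2 18 (-30) (by norm_num)
      (fun m h1 h6 => by interval_cases m <;> norm_num) β hb hc
    norm_num at this ⊢
    linarith

lemma line6 : ∀ m : ℕ, 1 ≤ m → m ≤ 6 → (6:ℝ) * m + (-6) ≤ (m:ℝ)^3 - m := by
  intro m h1 h6; interval_cases m <;> norm_num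

lemma quant3 : quantU 3 = 1/4 := by
  apply quant_eq19 3 (1/4) {3/2, 7/2, 11/2} (by simp) (by norm_num [Finset.card_insert_le])
  · rw [errU, Icc16']; norm_num [Finset.inf'_insert, min_def]
  · intro β hb hc
    have := lower19 3 6 (-6) (by norm_num) line6 β hb hc
    norm_num at this ⊢
    linarith

lemma quant4 : quantU 4 = 1/6 := by
  apply quant_eq19 4 (1/6) {3/2, 7/2, 5, 6} (by simp) (by norm_num [Finset.card_insert_le])
  · rw [errU, Icc16']; norm_num [Finset.inf'_insert, min_def]
  · intro β hb hc
    have := lower19 4 6 (-6) (by norm_num) line6 β hb hc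
    norm_num at this ⊢
    linarith

lemma quant5 : quantU 5 = 1/12 := by
  apply quant_eq19 5 (1/12) {3/2, 3, 4, 5, 6} (by simp) (by norm_num [Finset.card_insert_le])
  · rw [errU, Icc16']; norm_num [Finset.inf'_insert, min_def]
  · intro β hb hc
    have := lower19 5 6 (-6) (by norm_num) line6 β hb hc
    norm_num at this ⊢
    linarith

lemma quant6 : quantU 6 = 0 := by
  apply quant_eq19 6 0 {1, 2, 3, 4, 5, 6} (by simp) (by simp)
  · rw [errU, Icc16']; norm_num [Finset.inf'_insert, min_def]
  · intro β hb hc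
    have := lower19 6 0 0 (by norm_num)
      (fun m h1 h6 => by interval_cases m <;> norm_num) β hb hc
    norm_num at this ⊢
    linarith

theorem stmt19 :
    quantU 1 = 35/12 ∧
    errU {7/2} (by simp) = quantU 1 ∧
    errU {2, 5} (by simp) = quantU 2 ∧
    errU {3/2, 7/2, 11/2} (by simp) = quantU 3 ∧
    errU {3/2, 7/2, 5, 6} (by simp) = quantU 4 ∧
    errU {3/2, 3, 4, 5, 6} (by simp) = quantU 5 ∧
    errU {1, 2, 3, 4, 5, 6} (by simp) = quantU 6 ∧
    errU {1, 5/2, 4, 5, 6} (by simp) = quantU 5 ∧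
    ({1, 5/2, 4, 5, 6} : Finset ℝ) ≠ {3/2, 3, 4, 5, 6} := by
  refine ⟨quant1, ?_, ?_, ?_, ?_, ?_, ?_, ?_, ?_⟩
  · rw [quant1, errU, Icc16']; norm_num [Finset.inf'_insert, min_def]
  · rw [quant2, errU, Icc16']; norm_num [Finset.inf'_insert, min_def]
  · rw [quant3, errU, Icc16']; norm_num [Finset.inf'_insert, min_def]
  · rw [quant4, errU, Icc16']; norm_num [Finset.inf'_insert, min_def]
  · rw [quant5, errU, Icc16']; norm_num [Finset.inf'_insert, min_def]
  · rw [quant6, errU, Icc16']; norm_num [Finset.inf'_insert, min_def]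
  · rw [quant5, errU, Icc16']; norm_num [Finset.inf'_insert, min_def]
  · intro heq
    have h1 : (1:ℝ) ∈ ({1, 5/2, 4, 5, 6} : Finset ℝ) := by norm_num
    rw [heq] at h1
    norm_num at h1
end
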